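/- arXiv:2102.12251 — 6 statements merged into one kernel-verified Lean document; each statement's English description precedes it below -/
import Mathlib

section
/- For m, n ∈ ℤ, λ ∈ ℂ*, α ∈ ℂ, the operators L_m on ℂ[t] defined by L_m(f(t)) = λ^m (t + mα) f(t + m) satisfy the Witt algebra relation L_m L_n f - L_n L_m f = (m - n) L_{m+n} f for all f ∈ ℂ[t]. -/
open Polynomial

/-- The action `L_m f(t) = λ^m (t + m α) f(t + m)` on `ℂ[t]`. -/
noncomputable def Lw (lam α : ℂ) (m : ℤ) (f : Polynomial ℂ) : Polynomial ℂ :=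
  lam ^ m • ((X + C ((m : ℂ) * α)) * f.comp (X + C (m : ℂ)))

theorem stmt0 (lam : ℂ) (hlam : lam ≠ 0) (α : ℂ) (m n : ℤ) (f : Polynomial ℂ) :
    Lw lam α m (Lw lam α n f) - Lw lam α n (Lw lam α m f)
      = ((m - n : ℤ) : ℂ) • Lw lam α (m + n) f := by
  simp only [Lw, smul_comp, mul_comp, add_comp, X_comp, C_comp, comp_assoc,
    mul_smul_comm, smul_smul, ← zpow_add₀ hlam]
  rw [add_comm n m]
  simp only [smul_eq_C_mul]
  push_cast
  rw [show X + C (n:ℂ) + C (m:ℂ) = X + C ((m:ℂ) + n) by rw [C_add]; ring,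
    show X + C (m:ℂ) + C (n:ℂ) = X + C ((m:ℂ) + n) by rw [C_add]; ring]
  simp only [C_add, C_sub, C_mul]
  ring
end

section
/- The Witt module Ω(λ, α) = ℂ[t] with action L_m(f(t)) = λ^m (t + mα) f(t + m) is a simple module over the Witt algebra if and only if α ≠ 0. -/
open Polynomial

/-- An invariant submodule is closed under the unscaled operators. -/
lemma Fm_mem (lam α : ℂ) (hlam : lam ≠ 0) (N : Submodule ℂ (Polynomial ℂ))
    (hN : ∀ (m : ℤ) (f : Polynomial ℂ), f ∈ N → Lw lam α m f ∈ N)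
    (m : ℤ) (f : Polynomial ℂ) (hf : f ∈ N) :
    (X + C ((m : ℂ) * α)) * f.comp (X + C (m : ℂ)) ∈ N := by
  have h := hN m f hf
  have h2 := N.smul_mem (lam ^ m)⁻¹ h
  rwa [Lw, smul_smul, inv_mul_cancel₀ (zpow_ne_zero m hlam), one_smul] at h2

/-- An invariant submodule is closed under multiplication by `X` (take `m = 0`). -/
lemma mulX_mem (lam α : ℂ) (hlam : lam ≠ 0) (N : Submodule ℂ (Polynomial ℂ))
    (hN : ∀ (m : ℤ) (f : Polynomial ℂ), f ∈ N → Lw lam α m f ∈ N)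
    (f : Polynomial ℂ) (hf : f ∈ N) : X * f ∈ N := by
  have h := Fm_mem lam α hlam N hN 0 f hf
  simpa using h

/-- An invariant submodule is closed under multiplication by any polynomial. -/
lemma mulPoly_mem (lam α : ℂ) (hlam : lam ≠ 0) (N : Submodule ℂ (Polynomial ℂ))
    (hN : ∀ (m : ℤ) (f : Polynomial ℂ), f ∈ N → Lw lam α m f ∈ N)
    (p f : Polynomial ℂ) (hf : f ∈ N) : p * f ∈ N := by
  induction p using Polynomial.induction_on with
  | C a => rw [← smul_eq_C_mul]; exact N.smul_mem a hf
  | add p q hp hq => rw [add_mul]; exact N.add_mem hp hq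
  | monomial n a ih =>
      have h := mulX_mem lam α hlam N hN (C a * X ^ n * f) ih
      have e : C a * X ^ (n + 1) * f = X * (C a * X ^ n * f) := by ring
      rwa [e]

/-- `Ω(λ, α)` is a simple Witt module iff `α ≠ 0`. -/
theorem stmt1 (lam : ℂ) (hlam : lam ≠ 0) (α : ℂ) :
    (∀ N : Submodule ℂ (Polynomial ℂ),
        (∀ (m : ℤ) (f : Polynomial ℂ), f ∈ N → Lw lam α m f ∈ N) →
        N = ⊥ ∨ N = ⊤) ↔ α ≠ 0 := by
  constructor
  · -- if simple then α ≠ 0: otherwise X·ℂ[t] is a proper nonzero invariant submodule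
    intro h hα0
    subst hα0
    have hinv : ∀ (m : ℤ) (f : Polynomial ℂ),
        f ∈ (Ideal.span {(X : Polynomial ℂ)}).restrictScalars ℂ →
        Lw lam 0 m f ∈ (Ideal.span {(X : Polynomial ℂ)}).restrictScalars ℂ := by
      intro m f hf
      rw [Lw, mul_zero, map_zero, add_zero]
      refine Submodule.smul_mem _ _ ?_
      exact Ideal.mem_span_singleton.mpr (dvd_mul_right X _)
    rcases h _ hinv with hb | ht
    · have hX : (X : Polynomial ℂ) ∈ (Ideal.span {(X : Polynomial ℂ)}).restrictScalars ℂ :=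
        Ideal.subset_span rfl
      rw [hb] at hX
      exact Polynomial.X_ne_zero (Submodule.mem_bot ℂ |>.mp hX)
    · have h1 : (1 : Polynomial ℂ) ∈ (Ideal.span {(X : Polynomial ℂ)}).restrictScalars ℂ := by
        rw [ht]; trivial
      have : (X : Polynomial ℂ) ∣ 1 := Ideal.mem_span_singleton.mp h1
      exact Polynomial.not_isUnit_X (isUnit_of_dvd_one this)
  · -- if α ≠ 0 then simple
    intro hα N hN
    by_cases hbot : N = ⊥
    · exact Or.inl hbot
    right
    -- N is an ideal
    let I : Ideal (Polynomial ℂ) :=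
      { carrier := N
        add_mem' := fun ha hb => N.add_mem ha hb
        zero_mem' := N.zero_mem
        smul_mem' := fun c x hx => by
          simpa [smul_eq_mul] using mulPoly_mem lam α hlam N hN c x hx }
    have hmemI : ∀ x : Polynomial ℂ, x ∈ N ↔ x ∈ I := fun x => Iff.rfl
    obtain ⟨g, hg₀⟩ := (IsPrincipalIdealRing.principal I).principal
    have hg : I = Ideal.span {g} := hg₀
    -- g ≠ 0
    obtain ⟨f₀, hf₀N, hf₀⟩ := (Submodule.ne_bot_iff N).mp hbot
    have hg0 : g ≠ 0 := by
      rintro rfl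
      apply hf₀
      have h0 : f₀ ∈ Ideal.span ({0} : Set (Polynomial ℂ)) := by
        rw [← hg]; exact (hmemI f₀).mp hf₀N
      rw [Ideal.span_singleton_eq_bot.mpr rfl] at h0
      exact (Submodule.mem_bot _).mp h0
    -- g is a unit: otherwise it has a root with maximal real part, forcing α = 0
    have hunit : IsUnit g := by
      by_contra hgu
      have hdeg : g.degree ≠ 0 := fun hd => hgu (Polynomial.isUnit_iff_degree_eq_zero.mpr hd)
      obtain ⟨z, hz⟩ := Complex.isAlgClosed.exists_root g hdeg
      have hzS : z ∈ g.roots.toFinset := by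
        rw [Multiset.mem_toFinset, Polynomial.mem_roots hg0]
        exact hz
      obtain ⟨β, hβS, hβmax⟩ := Finset.exists_max_image g.roots.toFinset Complex.re ⟨z, hzS⟩
      have hβroot : g.eval β = 0 := by
        rw [Multiset.mem_toFinset, Polynomial.mem_roots hg0] at hβS
        exact hβS
      have key : ∀ m : ℤ, 0 < m → β + (m : ℂ) * α = 0 := by
        intro m hm
        have hgN : g ∈ N := by
          rw [hmemI, hg]
          exact Ideal.subset_span rfl
        have hFm := Fm_mem lam α hlam N hN m g hgN
        have hdvd : g ∣ (X + C ((m : ℂ) * α)) * g.comp (X + C (m : ℂ)) := by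
          rw [← Ideal.mem_span_singleton, ← hg]
          exact (hmemI _).mp hFm
        obtain ⟨q, hq⟩ := hdvd
        have heval : (β + (m : ℂ) * α) * g.eval (β + (m : ℂ)) = 0 := by
          have := congrArg (Polynomial.eval β) hq
          simp only [eval_mul, eval_comp, eval_add, eval_X, eval_C, hβroot, zero_mul] at this
          exact this
        rcases mul_eq_zero.mp heval with h0 | h0
        · exact h0
        · exfalso
          have hmem : β + (m : ℂ) ∈ g.roots.toFinset := by
            rw [Multiset.mem_toFinset, Polynomial.mem_roots hg0]
            exact h0
          have hle := hβmax _ hmem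
          have : (β + (m : ℂ)).re = β.re + (m : ℝ) := by
            simp
          rw [this] at hle
          have hm' : (0 : ℝ) < (m : ℝ) := by exact_mod_cast hm
          linarith
      have h1 := key 1 one_pos
      have h2 := key 2 two_pos
      push_cast at h1 h2
      apply hα
      linear_combination h2 - h1
    -- hence N = ⊤
    have hItop : I = ⊤ := by
      rw [hg, Ideal.span_singleton_eq_top.mpr hunit]
    rw [Submodule.eq_top_iff']
    intro x
    rw [hmemI, hItop]
    trivial
end

section
/- For p, q ∈ (1/2)ℤ with p + q ∈ ℤ, the operators G_p: ℂ[x] → ℂ[y] and G_p: ℂ[y] → ℂ[x] defined by G_p f(x) = t^{2p} λ^p f(y + p) and G_p g(y) = (−t)^{2p} λ^p (x + 2pα) g(x + p) satisfy G_p G_q f + G_q G_p f = (−1)^{2p} · 2 λ^{p+q} (x + (p+q)α) f(x + p + q) for all f ∈ ℂ[x], i.e. the anticommutator [G_p, G_q] acts as (−1)^{2p} 2 L_{p+q} on the even part. -/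
open Polynomial

/- Half-integers `p ∈ (1/2)ℤ` are encoded by their doubles `a = 2p ∈ ℤ`; `λ^p = ν^a`
for a fixed square root `ν` of `λ`, `t^{2p} = t^a`, `(−t)^{2p} = (−t)^a`. -/

/-- `G_p : ℂ[x] → ℂ[y]`, `G_p f(x) = t^{2p} λ^p f(y + p)`. -/
noncomputable def Geo (t nu : ℂ) (a : ℤ) (f : Polynomial ℂ) : Polynomial ℂ :=
  (t ^ a * nu ^ a) • f.comp (X + C ((a : ℂ) / 2))

/-- `G_p : ℂ[y] → ℂ[x]`, `G_p g(y) = (−t)^{2p} λ^p (x + 2pα) g(x + p)`. -/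
noncomputable def Goe (t nu α : ℂ) (a : ℤ) (g : Polynomial ℂ) : Polynomial ℂ :=
  ((-t) ^ a * nu ^ a) • ((X + C ((a : ℂ) * α)) * g.comp (X + C ((a : ℂ) / 2)))

/-- For `p + q ∈ ℤ`, the anticommutator `[G_p, G_q]` acts on the even part as
`(−1)^{2p} 2 L_{p+q}`. -/
theorem stmt4 (t nu α : ℂ) (ht : t = 1 ∨ t = -1) (hnu : nu ≠ 0)
    (a b : ℤ) (hab : Even (a + b)) (f : Polynomial ℂ) :
    Goe t nu α a (Geo t nu b f) + Goe t nu α b (Geo t nu a f)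
      = ((-1 : ℂ) ^ a * 2 * nu ^ (a + b)) •
          ((X + C (((a + b : ℤ) : ℂ) / 2 * α)) *
            f.comp (X + C (((a + b : ℤ) : ℂ) / 2))) := by
  have hcomp : ∀ c d : ℂ, (f.comp (X + C c)).comp (X + C d) = f.comp (X + C (d + c)) := by
    intro c d
    rw [comp_assoc]
    congr 1
    rw [add_comp, X_comp, C_comp, add_assoc, ← C_add]
  have hba : Even (b + a) := by rwa [add_comm]
  have hneg : (-1 : ℂ) ^ b = (-1 : ℂ) ^ a := by
    rcases Int.even_or_odd a with h | h
    · have hb : Even b := by rcases h with ⟨k, hk⟩; rcases hab with ⟨l, hl⟩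
                             exact ⟨l - k, by omega⟩
      rw [h.neg_one_zpow, hb.neg_one_zpow]
    · have hb : Odd b := by rcases h with ⟨k, hk⟩; rcases hab with ⟨l, hl⟩
                            exact ⟨l - k - 1, by omega⟩
      rw [h.neg_one_zpow, hb.neg_one_zpow]
  have hnt : ∀ c d : ℤ, (-t) ^ c * t ^ d = (-1 : ℂ) ^ c * t ^ (c + d) := by
    intro c d
    have h0 : t ≠ 0 := by rcases ht with h | h <;> simp [h]
    rw [neg_eq_neg_one_mul, mul_zpow, zpow_add₀ h0, mul_assoc]
  have hteven : t ^ (a + b) = 1 := by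
    rcases ht with h | h
    · simp [h]
    · rw [h]; exact hab.neg_one_zpow
  have hk1 : (-t) ^ a * nu ^ a * (t ^ b * nu ^ b)
      = (-1 : ℂ) ^ a * nu ^ (a + b) := by
    have : (-t) ^ a * nu ^ a * (t ^ b * nu ^ b)
        = ((-t) ^ a * t ^ b) * (nu ^ a * nu ^ b) := by ring
    rw [this, hnt a b, hteven, zpow_add₀ hnu]; ring
  have hk2 : (-t) ^ b * nu ^ b * (t ^ a * nu ^ a)
      = (-1 : ℂ) ^ a * nu ^ (a + b) := by
    have : (-t) ^ b * nu ^ b * (t ^ a * nu ^ a)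
        = ((-t) ^ b * t ^ a) * (nu ^ b * nu ^ a) := by ring
    rw [this, hnt b a, add_comm b a, hteven, ← zpow_add₀ hnu, add_comm b a]
    rw [hneg]; ring
  set s : ℂ := ((a + b : ℤ) : ℂ) / 2 with hs
  have hs1 : (a : ℂ) / 2 + (b : ℂ) / 2 = s := by rw [hs]; push_cast; ring
  have hs2 : (b : ℂ) / 2 + (a : ℂ) / 2 = s := by rw [hs]; push_cast; ring
  set F : Polynomial ℂ := f.comp (X + C s) with hF
  have e1 : Goe t nu α a (Geo t nu b f)
      = ((-1 : ℂ) ^ a * nu ^ (a + b)) • ((X + C ((a : ℂ) * α)) * F) := by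
    rw [Geo, Goe, smul_comp, hcomp, hs1, mul_smul_comm, smul_smul, hk1]
  have e2 : Goe t nu α b (Geo t nu a f)
      = ((-1 : ℂ) ^ a * nu ^ (a + b)) • ((X + C ((b : ℂ) * α)) * F) := by
    rw [Geo, Goe, smul_comp, hcomp, hs2, mul_smul_comm, smul_smul, hk2]
  have hC2 : (C (2:ℂ) : Polynomial ℂ) = 2 := map_ofNat C 2
  have hCC : C ((a : ℂ) * α) + C ((b : ℂ) * α) = 2 * C (s * α) := by
    rw [← hC2, ← C_add, ← C_mul]
    congr 1
    rw [hs]; push_cast; ring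
  have key : (X + C ((a : ℂ) * α)) * F + (X + C ((b : ℂ) * α)) * F
      = (2 : ℂ) • ((X + C (s * α)) * F) := by
    rw [smul_eq_C_mul, hC2]
    linear_combination F * hCC
  rw [e1, e2, ← smul_add, key, smul_smul]
  congr 1
  ring
end

section
/- For p, q ∈ (1/2)ℤ with p + q ∈ 1/2 + ℤ, the operators G_p defined on W = ℂ[x] ⊕ ℂ[y] satisfy G_p G_q f + G_q G_p f = (−1)^{2p+1}(p − q) I_{p+q} f for all f ∈ ℂ[x], where I_r f(x) = −2 t^{2r} λ^r α f(x + r). -/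
open Polynomial

/-- `I_r f(x) = −2 t^{2r} λ^r α f(x + r)` for `r = c/2`, `c` odd. -/
noncomputable def Ie (t nu α : ℂ) (c : ℤ) (f : Polynomial ℂ) : Polynomial ℂ :=
  (-2 * t ^ c * nu ^ c * α) • f.comp (X + C ((c : ℂ) / 2))

/-- For `p + q ∈ 1/2 + ℤ`, the anticommutator `[G_p, G_q]` acts on the even part as
`(−1)^{2p+1} (p − q) I_{p+q}`. -/
theorem stmt5 (t nu α : ℂ) (ht : t = 1 ∨ t = -1) (hnu : nu ≠ 0)
    (a b : ℤ) (hab : Odd (a + b)) (f : Polynomial ℂ) :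
    Goe t nu α a (Geo t nu b f) + Goe t nu α b (Geo t nu a f)
      = ((-1 : ℂ) ^ (a + 1) * (((a : ℂ) - (b : ℂ)) / 2)) • Ie t nu α (a + b) f := by
  have hcomp : ∀ u v : ℤ, ((X : Polynomial ℂ) + C ((u:ℂ)/2)).comp (X + C ((v:ℂ)/2))
      = X + C ((((u+v : ℤ)):ℂ)/2) := by
    intro u v
    simp only [add_comp, X_comp, C_comp, add_assoc, ← C_add]
    congr 1
    push_cast
    ring
  have key : ∀ (u : ℂ) (F : Polynomial ℂ),
      u • ((X + C ((a:ℂ) * α)) * F) + (-u) • ((X + C ((b:ℂ) * α)) * F)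
        = (u * (((a:ℂ) - b) * α)) • F := by
    intro u F
    simp only [smul_eq_C_mul, map_mul, map_sub, map_neg]
    ring
  have hne : (-1 : ℂ) ≠ 0 := by norm_num
  have hsq : ((-1:ℂ))^a * (-1:ℂ)^a = 1 := by
    rw [← zpow_add₀ hne]
    exact Even.neg_one_zpow ⟨a, rfl⟩
  have hprod : ((-1:ℂ))^a * (-1:ℂ)^b = -1 := by
    rw [← zpow_add₀ hne]
    exact Odd.neg_one_zpow hab
  have hm1 : ((-1:ℂ))^b = -((-1:ℂ))^a := by
    linear_combination ((-1:ℂ)^a) * hprod - ((-1:ℂ)^b) * hsq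
  simp only [Goe, Geo, Ie, smul_comp, Polynomial.comp_assoc, hcomp,
    mul_smul_comm, smul_smul]
  rw [show a + b = b + a from add_comm a b] at *
  rcases ht with rfl | rfl
  · simp only [one_zpow, mul_one, one_mul, neg_neg]
    rw [show (-1:ℂ)^b * nu^b * (nu^a) = -((-1:ℂ)^a * nu^a * nu^b) by
      rw [hm1]; ring]
    rw [key]
    congr 1
    rw [zpow_add₀ hne, zpow_one, zpow_add₀ hnu]
    ring
  · simp only [neg_neg, one_zpow, mul_one, one_mul]
    rw [show nu^b * (((-1:ℂ))^a * nu^a) = -(nu^a * ((-1:ℂ)^b * nu^b)) by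
      rw [hm1]; ring]
    rw [key]
    congr 1
    rw [zpow_add₀ hne, zpow_one, zpow_add₀ hne, zpow_add₀ hnu, hm1]
    linear_combination (nu^a * nu^b * α * (((a:ℂ))-b) * (-1:ℂ)^a) * hsq
end

section
/- Suppose V is a 𝒯-module free of rank 1 over U(𝔥) with even generator 1, on which the L_m act by L_m(f(∂²)1) = λ^m(∂² + mα)f(∂² + m)1. Write G_m 1 = a_m ∂·1 with a_m ∈ ℂ for m ∈ ℤ. Then the relation G_m²·1 = L_{2m}·1 together with [G_0, G_m]1 = 2L_m 1 forces a_m = λ^m for all m ∈ ℤ. -/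
open Polynomial

/- The polynomial identity (in the variable `∂²`)
`f(∂² + m) · (2λ^m(∂² + mα) − ∂² f(∂²)) = λ^{2m}(∂² + 2mα)`
forces `f` to be the constant `λ^m`. -/
theorem stmt14 (lam : ℂ) (hlam : lam ≠ 0) (α : ℂ) (m : ℤ) (f : Polynomial ℂ)
    (h : f.comp (X + C (m : ℂ)) *
          ((2 * lam ^ m) • (X + C ((m : ℂ) * α)) - X * f)
        = lam ^ (2 * m) • (X + C (2 * (m : ℂ) * α))) :
    f = C (lam ^ m) := by
  have hL0 : lam ^ m ≠ 0 := zpow_ne_zero _ hlam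
  have h2 : lam ^ (2 * m) = lam ^ m * lam ^ m := by
    rw [two_mul, zpow_add₀ hlam]
  by_cases hf0 : f = 0
  · exfalso
    rw [hf0] at h
    simp only [zero_comp, zero_mul] at h
    have h1 := congrArg (fun p => Polynomial.coeff p 1) h
    simp only [coeff_zero, coeff_smul, coeff_add, coeff_X_one, coeff_C, smul_eq_mul] at h1
    norm_num at h1
    exact hL0 (by rw [h2] at h1; exact (mul_self_eq_zero).mp h1.symm)
  by_cases hd : f.natDegree = 0
  · obtain ⟨c, rfl⟩ := natDegree_eq_zero.mp hd
    have h1 := congrArg (fun p => Polynomial.coeff p 1) h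
    simp only [C_comp, coeff_smul, coeff_sub, coeff_add, coeff_X_one, coeff_C,
      coeff_C_mul, coeff_X_mul, smul_eq_mul, coeff_mul_C] at h1
    norm_num at h1
    have hc : (c - lam ^ m) ^ 2 = 0 := by
      rw [h2] at h1
      ring_nf
      ring_nf at h1
      linear_combination -h1
    have hc0 : c = lam ^ m :=
      sub_eq_zero.mp (pow_eq_zero_iff (two_ne_zero) |>.mp hc)
    rw [hc0]
  · exfalso
    have hd1 : 1 ≤ f.natDegree := Nat.one_le_iff_ne_zero.mpr hd
    have hFdeg : (f.comp (X + C (m : ℂ))).natDegree = f.natDegree := by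
      rw [natDegree_comp, natDegree_X_add_C, mul_one]
    have hFne : f.comp (X + C (m : ℂ)) ≠ 0 := by
      intro hF
      rw [hF, natDegree_zero] at hFdeg
      omega
    have hXf : (X * f).natDegree = f.natDegree + 1 := by
      rw [natDegree_mul X_ne_zero hf0, natDegree_X]; ring
    have hsmul : ((2 * lam ^ m) • (X + C ((m : ℂ) * α))).natDegree ≤ 1 := by
      refine le_trans (natDegree_smul_le _ _) ?_
      rw [natDegree_X_add_C]
    have hglt : ((2 * lam ^ m) • (X + C ((m : ℂ) * α))).natDegree < (X * f).natDegree := by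
      omega
    have hgdeg : ((2 * lam ^ m) • (X + C ((m : ℂ) * α)) - X * f).natDegree
        = f.natDegree + 1 := by
      rw [natDegree_sub_eq_right_of_natDegree_lt hglt, hXf]
    have hg0 : (2 * lam ^ m) • (X + C ((m : ℂ) * α)) - X * f ≠ 0 := by
      intro hg
      rw [hg, natDegree_zero] at hgdeg
      omega
    have hLHS := natDegree_mul hFne hg0
    rw [h, hFdeg, hgdeg] at hLHS
    have hRHS : ((lam ^ (2 * m)) • (X + C (2 * (m : ℂ) * α))).natDegree ≤ 1 := by
      refine le_trans (natDegree_smul_le _ _) ?_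
      rw [natDegree_X_add_C]
    omega
end

section
/- Every 𝒯-module W that is free of rank 2 as a U(ℂL_0)-module with two homogeneous basis elements must have the two basis elements of opposite parity; if they had the same parity then G_{±r}v = G_{±r}w = 0 for all r ∈ 1/2+ℤ, forcing L_0 v = L_0 w = 0 via L_0 = −(1/2)[G_r, G_{−r}], contradicting freeness. -/
open Polynomial

lemma aeval_mem_of_invariant {W : Type*} [AddCommGroup W] [Module ℂ W]
    (S : Submodule ℂ W) (f : Module.End ℂ W) (hf : ∀ x ∈ S, f x ∈ S)
    (p : Polynomial ℂ) (x : W) (hx : x ∈ S) : (Polynomial.aeval f p) x ∈ S := by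
  induction p using Polynomial.induction_on' with
  | add p q hp hq =>
      simp only [map_add, LinearMap.add_apply]
      exact S.add_mem hp hq
  | monomial n a =>
      simp only [aeval_monomial, Module.End.mul_apply, Module.algebraMap_end_apply,
        LinearMap.smul_apply]
      refine S.smul_mem a ?_
      induction n with
      | zero => simpa using hx
      | succ n ih =>
          rw [pow_succ', Module.End.mul_apply]
          exact hf _ ih

lemma key_contra {W : Type*} [AddCommGroup W] [Module ℂ W]
    (ℓ : Module.End ℂ W) (v w : W) (hlv : ℓ v = 0)
    (hfree : Function.Bijective (fun q : Polynomial ℂ × Polynomial ℂ =>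
        (Polynomial.aeval ℓ q.1) v + (Polynomial.aeval ℓ q.2) w)) : False := by
  have h : ((X : Polynomial ℂ), (0 : Polynomial ℂ)) = ((0 : Polynomial ℂ), 0) := by
    apply hfree.injective
    simp [hlv]
  exact Polynomial.X_ne_zero (congrArg Prod.fst h)

theorem stmt16 {W : Type*} [AddCommGroup W] [Module ℂ W]
    (W0 W1 : Submodule ℂ W) (hdisj : W0 ⊓ W1 = ⊥) (hsup : W0 ⊔ W1 = ⊤)
    (ℓ : Module.End ℂ W) (G : ℤ → Module.End ℂ W)
    (hl0 : ∀ v ∈ W0, ℓ v ∈ W0) (hl1 : ∀ v ∈ W1, ℓ v ∈ W1)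
    (hG01 : ∀ a : ℤ, Odd a → ∀ v ∈ W0, G a v ∈ W1)
    (hG10 : ∀ a : ℤ, Odd a → ∀ v ∈ W1, G a v ∈ W0)
    (hGG : ∀ a : ℤ, Odd a → G a * G (-a) + G (-a) * G a = (-2 : ℂ) • ℓ)
    (v w : W) (hv : v ∈ W0 ∨ v ∈ W1) (hw : w ∈ W0 ∨ w ∈ W1)
    (hfree : Function.Bijective (fun q : Polynomial ℂ × Polynomial ℂ =>
        (Polynomial.aeval ℓ q.1) v + (Polynomial.aeval ℓ q.2) w)) :
    (v ∈ W0 ∧ w ∈ W1) ∨ (v ∈ W1 ∧ w ∈ W0) := by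
  have odd1 : Odd (1 : ℤ) := odd_one
  have key : ∀ (S T : Submodule ℂ W), S ⊓ T = ⊥ →
      (∀ x ∈ S, ℓ x ∈ S) →
      (∀ a : ℤ, Odd a → ∀ x ∈ S, G a x ∈ T) →
      v ∈ S → w ∈ S → False := by
    intro S T hST hlS hGS hvS hwS
    -- every element of W lies in S
    have hall : ∀ x : W, x ∈ S := by
      intro x
      obtain ⟨q, hq⟩ := hfree.surjective x
      rw [← hq]
      exact S.add_mem (aeval_mem_of_invariant S ℓ hlS q.1 v hvS)
        (aeval_mem_of_invariant S ℓ hlS q.2 w hwS)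
    have hTbot : T = ⊥ := by
      rw [← hST]
      refine le_antisymm ?_ inf_le_right
      exact le_inf (fun x _ => hall x) le_rfl
    have hGv : ∀ a : ℤ, Odd a → G a v = 0 := by
      intro a ha
      have := hGS a ha v hvS
      rw [hTbot] at this
      simpa using this
    have hlv : ℓ v = 0 := by
      have h := congrArg (fun f : Module.End ℂ W => f v) (hGG 1 odd1)
      simp only [LinearMap.add_apply, Module.End.mul_apply, LinearMap.smul_apply] at h
      rw [hGv (-1) (by decide), hGv 1 odd1] at h
      simp only [map_zero, add_zero, zero_add] at h
      have : ((-2 : ℂ)) • ℓ v = 0 := h.symm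
      simpa [smul_eq_zero] using this
    exact key_contra ℓ v w hlv hfree
  rcases hv with hv0 | hv1 <;> rcases hw with hw0 | hw1
  · exact absurd (key W0 W1 hdisj hl0 hG01 hv0 hw0) (fun h => h)
  · exact Or.inl ⟨hv0, hw1⟩
  · exact Or.inr ⟨hv1, hw0⟩
  · exact absurd (key W1 W0 (by rw [inf_comm]; exact hdisj) hl1 hG10 hv1 hw1) (fun h => h)
end
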